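/- For any finite concept class C, RTD(C) = max over nonempty subsets C' ⊆ C of TD_min(C'), where TD_min(C') = min_{c ∈ C'} TS(c, C') and TS(c, C') is the minimum teaching set size of c with respect to C'. -/

import Mathlib

/-- A set `S` is a teaching set of `c` with respect to the class `C`:
every other concept in `C` differs from `c` on some point of `S`. -/
def IsTeachingSet {X : Type*} (C : Finset (X → Bool)) (c : X → Bool) (S : Finset X) : Prop :=
  ∀ c' ∈ C, c' ≠ c → ∃ x ∈ S, c x ≠ c' x

/-- Minimum teaching set size of `c` with respect to `C`. -/
noncomputable def TS {X : Type*} (C : Finset (X → Bool)) (c : X → Bool) : ℕ :=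
  sInf {n | ∃ S : Finset X, S.card = n ∧ IsTeachingSet C c S}

/-- A teaching plan: an ordering of all concepts of `C` (as first components)
together with sets that teach each concept w.r.t. the remaining suffix. -/
def IsTeachingPlan {X : Type*} [Fintype X] [DecidableEq X]
    (C : Finset (X → Bool)) (L : List ((X → Bool) × Finset X)) : Prop :=
  (L.map Prod.fst).Nodup ∧ (L.map Prod.fst).toFinset = C ∧
  ∀ i (hi : i < L.length),
    IsTeachingSet ((L.drop i).map Prod.fst).toFinset (L.get ⟨i, hi⟩).1 (L.get ⟨i, hi⟩).2

/-- Recursive teaching dimension. -/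
noncomputable def RTD {X : Type*} [Fintype X] [DecidableEq X] (C : Finset (X → Bool)) : ℕ :=
  sInf {k | ∃ L, IsTeachingPlan C L ∧ ∀ p ∈ L, p.2.card ≤ k}

/-- The gadget class: all boolean functions on `Z` with exactly `k` ones. -/
def gadgetH (Z : Type*) [Fintype Z] [DecidableEq Z] (k : ℕ) : Finset (Z → Bool) :=
  Finset.univ.filter fun h => (Finset.univ.filter fun z => h z = true).card = k

/-- Minimum over concepts of the minimum teaching set size. -/
noncomputable def TDmin {X : Type*} (C : Finset (X → Bool)) : ℕ :=
  sInf {n | ∃ c ∈ C, TS C c = n}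

lemma isTeachingSet_univ {X : Type*} [Fintype X] (C : Finset (X → Bool)) (c : X → Bool) :
    IsTeachingSet C c Finset.univ := by
  intro c' _ hne
  by_contra h
  push_neg at h
  exact hne (funext fun x => (h x (Finset.mem_univ x)).symm)

lemma TS_set_nonempty {X : Type*} [Fintype X] [DecidableEq X] (C : Finset (X → Bool))
    (c : X → Bool) : {n | ∃ S : Finset X, S.card = n ∧ IsTeachingSet C c S}.Nonempty :=
  ⟨Fintype.card X, Finset.univ, Finset.card_univ, isTeachingSet_univ C c⟩

lemma TS_spec {X : Type*} [Fintype X] [DecidableEq X] (C : Finset (X → Bool)) (c : X → Bool) :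
    ∃ S : Finset X, S.card = TS C c ∧ IsTeachingSet C c S :=
  Nat.sInf_mem (TS_set_nonempty C c)

lemma TS_le_card {X : Type*} [Fintype X] [DecidableEq X] (C : Finset (X → Bool)) (c : X → Bool) :
    TS C c ≤ Fintype.card X :=
  Nat.sInf_le ⟨Finset.univ, Finset.card_univ, isTeachingSet_univ C c⟩

lemma TS_le_of_teach {X : Type*} (C : Finset (X → Bool)) (c : X → Bool) (S : Finset X)
    (h : IsTeachingSet C c S) : TS C c ≤ S.card :=
  Nat.sInf_le ⟨S, rfl, h⟩

lemma TDmin_le_TS {X : Type*} (C : Finset (X → Bool)) {c : X → Bool} (hc : c ∈ C) :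
    TDmin C ≤ TS C c :=
  Nat.sInf_le ⟨c, hc, rfl⟩

lemma TDmin_spec {X : Type*} (C : Finset (X → Bool)) (hC : C.Nonempty) :
    ∃ c ∈ C, TS C c = TDmin C := by
  obtain ⟨c₀, hc₀⟩ := hC
  have hne : {n | ∃ c ∈ C, TS C c = n}.Nonempty := ⟨TS C c₀, c₀, hc₀, rfl⟩
  exact Nat.sInf_mem hne

/-- Greedy construction of a teaching plan. -/
lemma exists_plan {X : Type*} [Fintype X] [DecidableEq X] (M : ℕ) :
    ∀ C : Finset (X → Bool), (∀ C' ⊆ C, C'.Nonempty → TDmin C' ≤ M) →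
      ∃ L, IsTeachingPlan C L ∧ ∀ p ∈ L, p.2.card ≤ M := by
  intro C
  induction C using Finset.strongInduction with
  | _ C ih =>
    intro hM
    rcases C.eq_empty_or_nonempty with rfl | hne
    · exact ⟨[], ⟨List.nodup_nil, by simp, fun i hi => absurd hi (by simp)⟩, by simp⟩
    · obtain ⟨c, hc, hcTS⟩ := TDmin_spec C hne
      obtain ⟨S, hScard, hSteach⟩ := TS_spec C c
      obtain ⟨L', ⟨hnd, htf, hplan⟩, hbd⟩ := ih (C.erase c) (Finset.erase_ssubset hc)
        (fun C' hsub hne' => hM C' (hsub.trans (Finset.erase_subset _ _)) hne')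
      refine ⟨(c, S) :: L', ⟨?_, ?_, ?_⟩, ?_⟩
      · simp only [List.map_cons, List.nodup_cons]
        refine ⟨fun hmem => ?_, hnd⟩
        have : c ∈ (L'.map Prod.fst).toFinset := List.mem_toFinset.mpr hmem
        rw [htf] at this
        exact (Finset.mem_erase.mp this).1 rfl
      · simp only [List.map_cons, List.toFinset_cons, htf]
        exact Finset.insert_erase hc
      · intro i hi
        match i with
        | 0 =>
          simp only [List.drop_zero, List.map_cons, List.toFinset_cons, htf,
            Finset.insert_erase hc, List.get]
          exact hSteach
        | Nat.succ j =>
          have hj : j < L'.length := by simpa using hi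
          simpa using hplan j hj
      · intro p hp
        rcases List.mem_cons.mp hp with rfl | hp'
        · simp only
          rw [hScard, hcTS]
          exact hM C (le_refl _) hne
        · exact hbd p hp'

lemma plan_bound {X : Type*} [Fintype X] [DecidableEq X] {C : Finset (X → Bool)}
    {L : List ((X → Bool) × Finset X)} {k : ℕ}
    (hL : IsTeachingPlan C L) (hk : ∀ p ∈ L, p.2.card ≤ k)
    {C' : Finset (X → Bool)} (hsub : C' ⊆ C) (hne : C'.Nonempty) : TDmin C' ≤ k := by
  classical
  obtain ⟨hnd, htf, hplan⟩ := hL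
  -- membership index predicate
  set P : ℕ → Prop := fun j => ∃ h : j < L.length, (L.get ⟨j, h⟩).1 ∈ C' with hP
  have hPdec : DecidablePred P := Classical.decPred P
  have hPex : ∃ j, P j := by
    obtain ⟨c₀, hc₀⟩ := hne
    have : c₀ ∈ (L.map Prod.fst).toFinset := htf ▸ hsub hc₀
    rw [List.mem_toFinset, List.mem_map] at this
    obtain ⟨p, hpL, hp1⟩ := this
    obtain ⟨⟨j, hj⟩, hget⟩ := List.mem_iff_get.mp hpL
    exact ⟨j, hj, by rw [hget, hp1]; exact hc₀⟩
  haveI := hPdec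
  obtain ⟨hi, hci⟩ := Nat.find_spec hPex
  set i := Nat.find hPex with hidef
  have hmin : ∀ j, j < i → ¬ P j := fun j hj => Nat.find_min hPex hj
  set c := (L.get ⟨i, hi⟩).1 with hc
  set S := (L.get ⟨i, hi⟩).2 with hS
  have hteachC' : IsTeachingSet C' c S := by
    intro c'' hc'' hne''
    -- find index of c''
    have : c'' ∈ (L.map Prod.fst).toFinset := htf ▸ hsub hc''
    rw [List.mem_toFinset, List.mem_map] at this
    obtain ⟨p, hpL, hp1⟩ := this
    obtain ⟨⟨j, hj⟩, hget⟩ := List.mem_iff_get.mp hpL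
    have hji : i ≤ j := by
      by_contra hlt
      push_neg at hlt
      exact (hmin j hlt) ⟨hj, by rw [hget, hp1]; exact hc''⟩
    -- c'' is in the suffix
    have hmemdrop : c'' ∈ ((L.drop i).map Prod.fst).toFinset := by
      rw [List.mem_toFinset, List.mem_map]
      refine ⟨p, ?_, hp1⟩
      have hj' : j - i < (L.drop i).length := by
        rw [List.length_drop]
        omega
      have : (L.drop i).get ⟨j - i, hj'⟩ = L.get ⟨j, hj⟩ := by
        simp only [List.get_eq_getElem, List.getElem_drop]
        congr 1
        omega
      rw [← hget, ← this]
      exact List.get_mem _ _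
    exact hplan i hi c'' hmemdrop hne''
  have hpmem : (L.get ⟨i, hi⟩) ∈ L := List.get_mem _ _
  calc TDmin C' ≤ TS C' c := TDmin_le_TS C' hci
    _ ≤ S.card := TS_le_of_teach C' c S hteachC'
    _ ≤ k := hk _ hpmem

theorem stmt6 {X : Type*} [Fintype X] [DecidableEq X]
    (C : Finset (X → Bool)) (hC : C.Nonempty) :
    RTD C = sSup {n | ∃ C' : Finset (X → Bool), C' ⊆ C ∧ C'.Nonempty ∧ TDmin C' = n} := by
  classical
  set A : Set ℕ := {n | ∃ C' : Finset (X → Bool), C' ⊆ C ∧ C'.Nonempty ∧ TDmin C' = n} with hA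
  have hTD_le : ∀ C' : Finset (X → Bool), C'.Nonempty → TDmin C' ≤ Fintype.card X := by
    intro C' hne
    obtain ⟨c, hc⟩ := hne
    exact (TDmin_le_TS C' hc).trans (TS_le_card C' c)
  have hAne : A.Nonempty := ⟨TDmin C, C, le_refl _, hC, rfl⟩
  have hAbdd : BddAbove A := ⟨Fintype.card X, fun n ⟨C', _, hne, hEq⟩ => hEq ▸ hTD_le C' hne⟩
  have hRTDne : {k | ∃ L, IsTeachingPlan C L ∧ ∀ p ∈ L, p.2.card ≤ k}.Nonempty := by
    obtain ⟨L, hL, hbd⟩ := exists_plan (Fintype.card X) C (fun C' _ hne => hTD_le C' hne)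
    exact ⟨Fintype.card X, L, hL, hbd⟩
  apply le_antisymm
  · -- RTD ≤ sSup
    obtain ⟨L, hL, hbd⟩ := exists_plan (sSup A) C
      (fun C' hsub hne => le_csSup hAbdd ⟨C', hsub, hne, rfl⟩)
    exact Nat.sInf_le ⟨L, hL, hbd⟩
  · -- sSup ≤ RTD
    obtain ⟨L, hL, hbd⟩ := Nat.sInf_mem hRTDne
    exact csSup_le hAne (fun n ⟨C', hsub, hne, hEq⟩ => hEq ▸ plan_bound hL hbd hsub hne)
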